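/- Let X be a proper metric space (every closed bounded subset of X is compact), p ∈ X, and Γ a pointwise-sequentially closed subgroup of the group of isometric equivalences of X. Then for all real numbers a, b with 0 < a ≤ b, the following are equivalent: (i) σ(Γ, p) ∩ (a, b] = ∅; (ii) 𝒢(Γ, p, a) = 𝒢(Γ, p, b). -/

import Mathlib

/-- `𝒢(Γ, p, r)`: the subgroup generated by the elements of `Γ` moving `p` a
distance at most `r`. -/
def genBelow {X : Type*} [MetricSpace X] (Γ : Subgroup (X ≃ᵢ X)) (p : X) (r : ℝ) :
    Subgroup (X ≃ᵢ X) :=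
  Subgroup.closure {g : X ≃ᵢ X | g ∈ Γ ∧ dist (g p) p ≤ r}

/-- The norm spectrum `σ(Γ, p)`: the set of `r ≥ 0` such that
`𝒢(Γ, p, r) ≠ 𝒢(Γ, p, r - ε)` for every `ε > 0`. -/
def normSpectrum {X : Type*} [MetricSpace X] (Γ : Subgroup (X ≃ᵢ X)) (p : X) :
    Set ℝ :=
  {r : ℝ | 0 ≤ r ∧ ∀ ε : ℝ, 0 < ε → genBelow Γ p r ≠ genBelow Γ p (r - ε)}

section Aux

open Filter Metric Topology

variable {X : Type*} [MetricSpace X] [ProperSpace X]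

/-- Pointwise subsequential limit of isometries with bounded displacement. -/
lemma aux_ptwise (p : X) (g : ℕ → X ≃ᵢ X) (C : ℝ) (hC : ∀ n, dist (g n p) p ≤ C) :
    ∃ φ : ℕ → ℕ, StrictMono φ ∧ ∃ h : X → X,
      ∀ x, Tendsto (fun n => g (φ n) x) atTop (𝓝 (h x)) := by
  have : Nonempty X := ⟨p⟩
  obtain ⟨u, hu⟩ := TopologicalSpace.exists_dense_seq X
  set K : ℕ → Set X := fun i => closedBall p (dist (u i) p + C) with hK
  have hKc : IsCompact (Set.univ.pi K) :=
    isCompact_univ_pi fun i => isCompact_closedBall _ _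
  have hmem : ∀ n, (fun i => g n (u i)) ∈ Set.univ.pi K := by
    intro n i _
    simp only [hK, mem_closedBall]
    calc dist (g n (u i)) p ≤ dist (g n (u i)) (g n p) + dist (g n p) p := dist_triangle _ _ _
      _ ≤ dist (u i) p + C := by rw [(g n).isometry.dist_eq]; exact add_le_add le_rfl (hC n)
  obtain ⟨y, -, φ, hφ, hconv⟩ := hKc.tendsto_subseq hmem
  have hconv' : ∀ i, Tendsto (fun n => g (φ n) (u i)) atTop (𝓝 (y i)) := by
    intro i
    exact (tendsto_pi_nhds.mp hconv i)
  have hcauchy : ∀ x : X, CauchySeq (fun n => g (φ n) x) := by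
    intro x
    rw [Metric.cauchySeq_iff]
    intro ε hε
    obtain ⟨i, hi⟩ := hu.exists_dist_lt x (by positivity : (0:ℝ) < ε/3)
    obtain ⟨N, hN⟩ := Metric.cauchySeq_iff.mp (hconv' i).cauchySeq (ε/3) (by positivity)
    refine ⟨N, fun m hm n hn => ?_⟩
    calc dist (g (φ m) x) (g (φ n) x)
        ≤ dist (g (φ m) x) (g (φ m) (u i)) + dist (g (φ m) (u i)) (g (φ n) (u i))
            + dist (g (φ n) (u i)) (g (φ n) x) := dist_triangle4 _ _ _ _
      _ < ε/3 + ε/3 + ε/3 := by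
          rw [(g (φ m)).isometry.dist_eq, (g (φ n)).isometry.dist_eq, dist_comm (u i) x]
          exact add_lt_add (add_lt_add hi (hN m hm n hn)) hi
      _ = ε := by ring
  have hlim : ∀ x : X, ∃ l, Tendsto (fun n => g (φ n) x) atTop (𝓝 l) :=
    fun x => cauchySeq_tendsto_of_complete (hcauchy x)
  choose h hh using hlim
  exact ⟨φ, hφ, h, hh⟩

/-- Full subsequential limit: the limit is an isometric equivalence. -/
lemma aux_limit (p : X) (g : ℕ → X ≃ᵢ X) (C : ℝ) (hC : ∀ n, dist (g n p) p ≤ C) :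
    ∃ φ : ℕ → ℕ, StrictMono φ ∧ ∃ h : X ≃ᵢ X,
      ∀ x, Tendsto (fun n => g (φ n) x) atTop (𝓝 (h x)) := by
  obtain ⟨φ₁, hφ₁, h0, hh0⟩ := aux_ptwise p g C hC
  have hC' : ∀ n, dist ((g (φ₁ n))⁻¹ p) p ≤ C := by
    intro n
    have : dist ((g (φ₁ n))⁻¹ p) p = dist (g (φ₁ n) p) p := by
      rw [← (g (φ₁ n)).isometry.dist_eq ((g (φ₁ n))⁻¹ p) p]
      simp [dist_comm]
    rw [this]; exact hC _
  obtain ⟨φ₂, hφ₂, k0, hk0⟩ := aux_ptwise p (fun n => (g (φ₁ n))⁻¹) C hC'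
  set φ : ℕ → ℕ := φ₁ ∘ φ₂ with hφdef
  have hφ : StrictMono φ := hφ₁.comp hφ₂
  have hh : ∀ x, Tendsto (fun n => g (φ n) x) atTop (𝓝 (h0 x)) :=
    fun x => (hh0 x).comp hφ₂.tendsto_atTop
  have hk : ∀ x, Tendsto (fun n => (g (φ n))⁻¹ x) atTop (𝓝 (k0 x)) := fun x => hk0 x
  -- h0 is an isometry
  have hiso : Isometry h0 := by
    apply Isometry.of_dist_eq
    intro x y
    have t1 : Tendsto (fun n => dist (g (φ n) x) (g (φ n) y)) atTop (𝓝 (dist (h0 x) (h0 y))) :=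
      (hh x).dist (hh y)
    have t2 : (fun n => dist (g (φ n) x) (g (φ n) y)) = fun _ => dist x y := by
      funext n; exact (g (φ n)).isometry.dist_eq x y
    rw [t2] at t1
    exact tendsto_nhds_unique t1 tendsto_const_nhds
  have hleft : ∀ x, k0 (h0 x) = x := by
    intro x
    have t1 := hk (h0 x)
    have t2 : Tendsto (fun n => (g (φ n))⁻¹ (h0 x)) atTop (𝓝 x) := by
      rw [tendsto_iff_dist_tendsto_zero]
      have : (fun n => dist ((g (φ n))⁻¹ (h0 x)) x) = fun n => dist (h0 x) (g (φ n) x) := by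
        funext n
        rw [← (g (φ n)).isometry.dist_eq ((g (φ n))⁻¹ (h0 x)) x]
        simp
      rw [this]
      have h2 : Tendsto (fun n => dist (h0 x) (g (φ n) x)) atTop (𝓝 (dist (h0 x) (h0 x))) :=
        Tendsto.dist tendsto_const_nhds (hh x)
      simpa using h2
    exact tendsto_nhds_unique t1 t2
  have hright : ∀ x, h0 (k0 x) = x := by
    intro x
    have t1 := hh (k0 x)
    have t2 : Tendsto (fun n => g (φ n) (k0 x)) atTop (𝓝 x) := by
      rw [tendsto_iff_dist_tendsto_zero]
      have : (fun n => dist (g (φ n) (k0 x)) x) = fun n => dist (k0 x) ((g (φ n))⁻¹ x) := by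
        funext n
        rw [← (g (φ n)).isometry.dist_eq (k0 x) ((g (φ n))⁻¹ x)]
        simp [dist_comm]
      rw [this]
      have h2 : Tendsto (fun n => dist (k0 x) ((g (φ n))⁻¹ x)) atTop (𝓝 (dist (k0 x) (k0 x))) :=
        Tendsto.dist tendsto_const_nhds (hk x)
      simpa using h2
    exact tendsto_nhds_unique t1 t2
  exact ⟨φ, hφ, ⟨⟨h0, k0, hleft, hright⟩, hiso⟩, hh⟩

lemma genBelow_mono (Γ : Subgroup (X ≃ᵢ X)) (p : X) {r r' : ℝ} (h : r ≤ r') :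
    genBelow Γ p r ≤ genBelow Γ p r' :=
  Subgroup.closure_mono fun g hg => ⟨hg.1, hg.2.trans h⟩

/-- Right-continuity step: in a proper space with a closed group, slightly larger
displacement generators are already in `genBelow Γ p s`. -/
lemma genBelow_step (p : X) (Γ : Subgroup (X ≃ᵢ X))
    (hclosed : ∀ g : ℕ → (X ≃ᵢ X), (∀ n, g n ∈ Γ) → ∀ h : X ≃ᵢ X,
      (∀ x : X, Filter.Tendsto (fun n => g n x) Filter.atTop (nhds (h x))) →
      h ∈ Γ)
    {s : ℝ} (hs : 0 < s) :
    ∃ δ > (0:ℝ), ∀ g : X ≃ᵢ X, g ∈ Γ → dist (g p) p ≤ s + δ → g ∈ genBelow Γ p s := by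
  by_contra hcon
  push_neg at hcon
  choose gs hmem hdist hnot using fun n : ℕ =>
    hcon (1/((n:ℝ)+1)) (by positivity)
  obtain ⟨φ, hφ, h, hconv⟩ := aux_limit p gs (s + 1) (fun n => (hdist n).trans
    (by have : 1/((n:ℝ)+1) ≤ 1 := by
          rw [div_le_one (by positivity)]; linarith [Nat.cast_nonneg (α := ℝ) n]
        linarith))
  have hhΓ : h ∈ Γ := hclosed (gs ∘ φ) (fun n => hmem (φ n)) h hconv
  -- dist (h p) p ≤ s
  have hlim1 : Tendsto (fun n => dist (gs (φ n) p) p) atTop (𝓝 (dist (h p) p)) :=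
    Tendsto.dist (hconv p) tendsto_const_nhds
  have hlim2 : Tendsto (fun n => s + 1/((φ n : ℝ)+1)) atTop (𝓝 (s + 0)) := by
    refine Tendsto.const_add s ?_
    have : Tendsto (fun n : ℕ => 1 / ((n : ℝ) + 1)) atTop (𝓝 0) := tendsto_one_div_add_atTop_nhds_zero_nat
    exact this.comp hφ.tendsto_atTop
  have hdh : dist (h p) p ≤ s := by
    have := le_of_tendsto_of_tendsto' hlim1 hlim2 (fun n => hdist (φ n))
    simpa using this
  have hhgen : h ∈ genBelow Γ p s := Subgroup.subset_closure ⟨hhΓ, hdh⟩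
  -- eventually gs (φ n) * h⁻¹ moves p at most s
  have hto0 : Tendsto (fun n => dist (gs (φ n) (h⁻¹ p)) p) atTop (𝓝 0) := by
    have h2 : Tendsto (fun n => dist (gs (φ n) (h⁻¹ p)) p) atTop (𝓝 (dist (h (h⁻¹ p)) p)) :=
      Tendsto.dist (hconv (h⁻¹ p)) tendsto_const_nhds
    simpa using h2
  have hev : ∀ᶠ n in atTop, dist (gs (φ n) (h⁻¹ p)) p < s :=
    hto0.eventually_lt_const hs
  obtain ⟨n, hn⟩ := hev.exists
  have hwΓ : gs (φ n) * h⁻¹ ∈ Γ := mul_mem (hmem (φ n)) (inv_mem hhΓ)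
  have hwgen : gs (φ n) * h⁻¹ ∈ genBelow Γ p s :=
    Subgroup.subset_closure ⟨hwΓ, le_of_lt hn⟩
  have : gs (φ n) ∈ genBelow Γ p s := by
    have := mul_mem hwgen hhgen
    simpa using this
  exact hnot (φ n) this

theorem empty_spectrum'' (p : X)
    (Γ : Subgroup (X ≃ᵢ X))
    (hclosed : ∀ g : ℕ → (X ≃ᵢ X), (∀ n, g n ∈ Γ) → ∀ h : X ≃ᵢ X,
      (∀ x : X, Filter.Tendsto (fun n => g n x) Filter.atTop (nhds (h x))) →
      h ∈ Γ)
    (a b : ℝ) (ha : 0 < a) (hab : a ≤ b) :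
    normSpectrum Γ p ∩ Set.Ioc a b = ∅ ↔ genBelow Γ p a = genBelow Γ p b := by
  constructor
  · intro hempty
    set S : Set ℝ := {r | a ≤ r ∧ r ≤ b ∧ genBelow Γ p r = genBelow Γ p a} with hS
    have haS : a ∈ S := ⟨le_refl a, hab, rfl⟩
    have hSne : S.Nonempty := ⟨a, haS⟩
    have hSbdd : BddAbove S := ⟨b, fun r hr => hr.2.1⟩
    set s := sSup S with hs
    have hsa : a ≤ s := le_csSup hSbdd haS
    have hsb : s ≤ b := csSup_le hSne fun r hr => hr.2.1
    -- s ∈ S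
    have hsS : genBelow Γ p s = genBelow Γ p a := by
      rcases eq_or_lt_of_le hsa with heq | hlt
      · rw [← heq]
      · -- s ∈ (a, b], so s ∉ normSpectrum
        have hsnot : s ∉ normSpectrum Γ p := by
          intro hmem
          have : s ∈ normSpectrum Γ p ∩ Set.Ioc a b := ⟨hmem, hlt, hsb⟩
          rw [hempty] at this; exact this
        have h0s : (0:ℝ) ≤ s := le_of_lt (lt_trans ha hlt)
        simp only [normSpectrum, Set.mem_setOf_eq, not_and, not_forall] at hsnot
        obtain ⟨ε, hε, heq⟩ := hsnot h0s
        push_neg at heq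
        obtain ⟨r, hrS, hr⟩ := exists_lt_of_lt_csSup hSne (show s - ε < s by linarith)
        apply le_antisymm
        · calc genBelow Γ p s = genBelow Γ p (s - ε) := heq
            _ ≤ genBelow Γ p r := genBelow_mono Γ p (le_of_lt hr)
            _ = genBelow Γ p a := hrS.2.2
        · exact genBelow_mono Γ p hsa
    -- s = b
    have hsbeq : s = b := by
      by_contra hne
      have hsltb : s < b := lt_of_le_of_ne hsb hne
      obtain ⟨δ, hδ, hstep⟩ := genBelow_step p Γ hclosed (lt_of_lt_of_le ha hsa)
      set r := min b (s + δ) with hr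
      have hrgts : s < r := lt_min hsltb (by linarith)
      have hrS : r ∈ S := by
        refine ⟨le_of_lt (lt_of_le_of_lt hsa hrgts), min_le_left _ _, ?_⟩
        apply le_antisymm
        · refine le_trans ?_ (le_of_eq hsS)
          rw [genBelow]
          apply (Subgroup.closure_le _).mpr
          intro g hg
          exact hstep g hg.1 (hg.2.trans (min_le_right _ _))
        · exact le_trans (le_of_eq hsS.symm) (genBelow_mono Γ p (le_of_lt hrgts))
      exact absurd (le_csSup hSbdd hrS) (not_le.mpr hrgts)
    rw [← hsbeq, ← hsS]
  · intro heq
    ext r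
    simp only [Set.mem_inter_iff, Set.mem_empty_iff_false, iff_false, not_and]
    rintro ⟨-, hspec⟩ ⟨har, hrb⟩
    refine hspec (r - a) (by linarith) ?_
    have h1 : genBelow Γ p r = genBelow Γ p a := by
      apply le_antisymm
      · exact le_of_le_of_eq (genBelow_mono Γ p hrb) heq.symm
      · exact genBelow_mono Γ p (le_of_lt har)
    rw [h1]
    congr 1
    ring

end Aux

/-- **Corollary (empty spectrum).**
For a proper metric space `X`, a pointwise-sequentially closed subgroup `Γ` of
its isometry group, and `0 < a ≤ b`, the spectrum `σ(Γ, p)` misses `(a, b]` iff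
`𝒢(Γ, p, a) = 𝒢(Γ, p, b)`. -/
theorem empty_spectrum (X : Type*) [MetricSpace X] [ProperSpace X] (p : X)
    (Γ : Subgroup (X ≃ᵢ X))
    (hclosed : ∀ g : ℕ → (X ≃ᵢ X), (∀ n, g n ∈ Γ) → ∀ h : X ≃ᵢ X,
      (∀ x : X, Filter.Tendsto (fun n => g n x) Filter.atTop (nhds (h x))) →
      h ∈ Γ)
    (a b : ℝ) (ha : 0 < a) (hab : a ≤ b) :
    normSpectrum Γ p ∩ Set.Ioc a b = ∅ ↔ genBelow Γ p a = genBelow Γ p b := by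
  exact empty_spectrum'' p Γ hclosed a b ha hab
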